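/- The cosine measure of the set of positive and negative coordinate vectors D = {±e_1, ..., ±e_n} in R^n equals 1/√n. -/

import Mathlib

open RealInnerProductSpace

lemma aux_norm_smul_single (n : ℕ) (i : Fin n) (ε : ℝ) (hε : ε = 1 ∨ ε = -1) :
    ‖ε • (EuclideanSpace.single i (1:ℝ))‖ = 1 := by
  rw [norm_smul, EuclideanSpace.norm_single]
  rcases hε with h | h <;> simp [h]

lemma aux_inner_smul_single (n : ℕ) (i : Fin n) (ε : ℝ)
    (v : EuclideanSpace ℝ (Fin n)) :
    ⟪ε • (EuclideanSpace.single i (1:ℝ)), v⟫ = ε * v i := by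
  rw [real_inner_smul_left, EuclideanSpace.inner_single_left]
  simp

/-- The cosine measure of D = {±e₁,…,…} -/
theorem cosine_measure_coordinate_vectors (n : ℕ) (hn : 0 < n) :
    (∀ v : EuclideanSpace ℝ (Fin n), v ≠ 0 →
      ∃ (i : Fin n) (ε : ℝ), (ε = 1 ∨ ε = -1) ∧
        (1 / Real.sqrt n) ≤
          ⟪ε • (EuclideanSpace.single i (1:ℝ)), v⟫ /
            (‖ε • (EuclideanSpace.single i (1:ℝ))‖ * ‖v‖)) ∧
    (∃ v : EuclideanSpace ℝ (Fin n), v ≠ 0 ∧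
      ∀ (i : Fin n) (ε : ℝ), (ε = 1 ∨ ε = -1) →
        ⟪ε • (EuclideanSpace.single i (1:ℝ)), v⟫ /
            (‖ε • (EuclideanSpace.single i (1:ℝ))‖ * ‖v‖) ≤ 1 / Real.sqrt n) := by
  have hsn : (0:ℝ) < Real.sqrt n := Real.sqrt_pos.mpr (by exact_mod_cast hn)
  constructor
  · intro v hv
    -- choose i maximizing |v i|
    obtain ⟨i, _, hi⟩ := Finset.exists_max_image Finset.univ (fun j => |v j|)
      (Finset.univ_nonempty_iff.mpr ⟨⟨0, hn⟩⟩)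
    have hvnorm : 0 < ‖v‖ := norm_pos_iff.mpr hv
    have hvi : 0 < |v i| := by
      by_contra h
      push_neg at h
      have : v = 0 := by
        ext j
        have := hi j (Finset.mem_univ j)
        have : |v j| ≤ 0 := le_trans this h
        simpa using le_antisymm this (abs_nonneg _)
      exact hv this
    refine ⟨i, if 0 ≤ v i then 1 else -1, by split <;> simp, ?_⟩
    have hεv : (if 0 ≤ v i then (1:ℝ) else -1) * v i = |v i| := by
      split_ifs with h
      · rw [abs_of_nonneg h]; ring
      · rw [abs_of_neg (not_le.mp h)]; ring
    rw [aux_inner_smul_single, aux_norm_smul_single n i _ (by split <;> simp), hεv, one_mul]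
    rw [div_le_div_iff₀ hsn hvnorm]
    -- ‖v‖ ≤ |v i| * √n
    have hnormle : ‖v‖ ≤ |v i| * Real.sqrt n := by
      rw [EuclideanSpace.norm_eq]
      have h1 : ∑ j, ‖v j‖ ^ 2 ≤ ∑ _j : Fin n, |v i| ^ 2 := by
        apply Finset.sum_le_sum
        intro j _
        have := hi j (Finset.mem_univ j)
        rw [Real.norm_eq_abs]
        exact pow_le_pow_left₀ (abs_nonneg _) this 2
      calc Real.sqrt (∑ j, ‖v j‖ ^ 2) ≤ Real.sqrt (∑ _j : Fin n, |v i| ^ 2) :=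
            Real.sqrt_le_sqrt h1
        _ = |v i| * Real.sqrt n := by
            rw [Finset.sum_const, Finset.card_univ, Fintype.card_fin, nsmul_eq_mul,
              Real.sqrt_mul (by positivity), Real.sqrt_sq (abs_nonneg _)]
            ring
    linarith
  · refine ⟨WithLp.toLp 2 (fun _ => 1), ?_, ?_⟩
    · intro h
      have := congrArg (fun w : EuclideanSpace ℝ (Fin n) => w ⟨0, hn⟩) h
      simp at this
    · intro i ε hε
      rw [aux_inner_smul_single, aux_norm_smul_single n i ε hε, one_mul]
      have hnv := EuclideanSpace.norm_eq (𝕜 := ℝ) (n := Fin n) (WithLp.toLp 2 (fun _ => 1))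
      simp only [PiLp.toLp_apply, norm_one, one_pow, Finset.sum_const, Finset.card_univ,
        Fintype.card_fin, nsmul_eq_mul, mul_one] at hnv
      rw [hnv]
      have h1 : ε * (1:ℝ) ≤ 1 := by rcases hε with h | h <;> simp [h]
      gcongr
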